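/- arXiv:0910.0137 — 2 statements merged into one kernel-verified Lean document; each statement's English description precedes it below -/
import Mathlib

section
/- Under the affine property and the Chapman–Kolmogorov equations, the exponents are order preserving: for all u,v ∈ S_d^+ with v ⪯ u and all t ≥ 0, one has φ(t,v) ≤ φ(t,u) and ψ(t,v) ⪯ ψ(t,u). -/
open MeasureTheory

noncomputable instance matrixMeasurableSpace (d : ℕ) :
    MeasurableSpace (Matrix (Fin d) (Fin d) ℝ) := borel _

instance matrixBorelSpace (d : ℕ) : BorelSpace (Matrix (Fin d) (Fin d) ℝ) := ⟨rfl⟩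

open Matrix in
/-- Diagonal entries of a PSD matrix are nonnegative. -/
lemma psd_diag_nonneg' {d : ℕ} {M : Matrix (Fin d) (Fin d) ℝ} (hM : M.PosSemidef)
    (i : Fin d) : 0 ≤ M i i := by
  have h := hM.dotProduct_mulVec_nonneg (Pi.single i 1)
  simpa [dotProduct, Matrix.mulVec, Pi.single_apply, mul_ite, ite_mul,
    Finset.sum_ite_eq, Finset.sum_ite_eq'] using h

/-- The trace of a PSD matrix is nonnegative. -/
lemma psd_trace_nonneg' {d : ℕ} {M : Matrix (Fin d) (Fin d) ℝ} (hM : M.PosSemidef) :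
    0 ≤ M.trace := by
  rw [Matrix.trace]
  exact Finset.sum_nonneg fun i _ => psd_diag_nonneg' hM i

/-- The trace of a product of PSD matrices is nonnegative. -/
lemma trace_mul_nonneg' {d : ℕ} {a b : Matrix (Fin d) (Fin d) ℝ}
    (ha : a.PosSemidef) (hb : b.PosSemidef) : 0 ≤ (a * b).trace := by
  obtain ⟨B, rfl⟩ : ∃ B : Matrix (Fin d) (Fin d) ℝ, b = star B * B := by
    open scoped MatrixOrder in
    exact CStarAlgebra.nonneg_iff_eq_star_mul_self.mp hb.nonneg
  rw [← Matrix.mul_assoc, Matrix.trace_mul_comm, ← Matrix.mul_assoc]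
  exact psd_trace_nonneg' (ha.mul_mul_conjTranspose_same B)

/-- Continuity of `ξ ↦ tr(u ξ)`. -/
lemma cont_trace_mul' {d : ℕ} (u : Matrix (Fin d) (Fin d) ℝ) :
    Continuous (fun ξ : Matrix (Fin d) (Fin d) ℝ => (u * ξ).trace) := by
  simp only [Matrix.trace, Matrix.diag, Matrix.mul_apply]
  refine continuous_finset_sum _ fun i _ => continuous_finset_sum _ fun j _ => ?_
  exact continuous_const.mul ((continuous_apply i).comp (continuous_apply j))

open Matrix in
lemma psd_vecMulVec' {d : ℕ} (y : Fin d → ℝ) : (Matrix.vecMulVec y y).PosSemidef := by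
  refine .of_dotProduct_mulVec_nonneg ?_ ?_
  · ext i j
    simp [Matrix.conjTranspose_apply, Matrix.vecMulVec_apply, mul_comm]
  · intro x
    have : star x ⬝ᵥ Matrix.vecMulVec y y *ᵥ x = (∑ j, y j * x j) * (∑ j, y j * x j) := by
      simp only [dotProduct, Matrix.mulVec, Matrix.vecMulVec_apply, star_trivial,
        Finset.mul_sum, Finset.sum_mul]
      rw [Finset.sum_comm]
      refine Finset.sum_congr rfl fun i _ => Finset.sum_congr rfl fun j _ => by ring
    rw [this]
    exact mul_self_nonneg _

open Matrix in
lemma trace_mul_vecMulVec' {d : ℕ} (A : Matrix (Fin d) (Fin d) ℝ) (y : Fin d → ℝ) :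
    (A * Matrix.vecMulVec y y).trace = y ⬝ᵥ A *ᵥ y := by
  simp only [Matrix.trace, Matrix.diag, Matrix.mul_apply, Matrix.vecMulVec_apply,
    dotProduct, Matrix.mulVec, Finset.mul_sum]
  refine Finset.sum_congr rfl fun i _ => Finset.sum_congr rfl fun j _ => by ring

open Matrix in
/-- Let `(p_t)_{t≥0}` be a family of sub-Markovian Borel transition
kernels on the cone `S_d^+` of positive semidefinite matrices (modelled as measures on
the space of `d×d` real matrices, supported on `S_d^+`, of total mass `≤ 1`), satisfying
the Chapman–Kolmogorov equations.  Suppose the affine property holds: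
`∫ e^{−⟨u,ξ⟩} p_t(x,dξ) = e^{−φ(t,u) − ⟨ψ(t,u),x⟩}` for all `t ≥ 0` and `u, x ∈ S_d^+`,
where `φ ≥ 0` and `ψ` takes values in `S_d^+` and `⟨a,b⟩ = tr(ab)`.  Then the exponents
are order preserving: for `v ⪯ u` (i.e. `u − v` positive semidefinite) and `t ≥ 0`,
one has `φ(t,v) ≤ φ(t,u)` and `ψ(t,v) ⪯ ψ(t,u)`. -/
theorem affine_exponents_order_preserving {d : ℕ}
    (p : ℝ → Matrix (Fin d) (Fin d) ℝ → Measure (Matrix (Fin d) (Fin d) ℝ))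
    (φ : ℝ → Matrix (Fin d) (Fin d) ℝ → ℝ)
    (ψ : ℝ → Matrix (Fin d) (Fin d) ℝ → Matrix (Fin d) (Fin d) ℝ)
    (hmeas : ∀ t : ℝ, 0 ≤ t → ∀ A : Set (Matrix (Fin d) (Fin d) ℝ), MeasurableSet A →
      Measurable (fun ξ => p t ξ A))
    (hsupp : ∀ t : ℝ, 0 ≤ t → ∀ x : Matrix (Fin d) (Fin d) ℝ, x.PosSemidef →
      p t x {ξ : Matrix (Fin d) (Fin d) ℝ | ¬ ξ.PosSemidef} = 0)
    (hsub : ∀ t : ℝ, 0 ≤ t → ∀ x : Matrix (Fin d) (Fin d) ℝ, x.PosSemidef →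
      p t x Set.univ ≤ 1)
    (hCK : ∀ s t : ℝ, 0 ≤ s → 0 ≤ t → ∀ x : Matrix (Fin d) (Fin d) ℝ, x.PosSemidef →
      ∀ A : Set (Matrix (Fin d) (Fin d) ℝ), MeasurableSet A →
        A ⊆ {ξ : Matrix (Fin d) (Fin d) ℝ | ξ.PosSemidef} →
        p (t + s) x A = ∫⁻ ξ, p s ξ A ∂(p t x))
    (hφ : ∀ t : ℝ, 0 ≤ t → ∀ u : Matrix (Fin d) (Fin d) ℝ, u.PosSemidef → 0 ≤ φ t u)
    (hψ : ∀ t : ℝ, 0 ≤ t → ∀ u : Matrix (Fin d) (Fin d) ℝ, u.PosSemidef →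
      (ψ t u).PosSemidef)
    (haff : ∀ t : ℝ, 0 ≤ t → ∀ u x : Matrix (Fin d) (Fin d) ℝ,
      u.PosSemidef → x.PosSemidef →
      ∫ ξ, Real.exp (-(u * ξ).trace) ∂(p t x)
        = Real.exp (-(φ t u) - ((ψ t u) * x).trace)) :
    ∀ t : ℝ, 0 ≤ t → ∀ u v : Matrix (Fin d) (Fin d) ℝ,
      u.PosSemidef → v.PosSemidef → (u - v).PosSemidef →
      φ t v ≤ φ t u ∧ (ψ t u - ψ t v).PosSemidef := by
  intro t ht u v hu hv huv
  -- Key inequality: for every PSD x, φ(t,v) + ⟨ψ(t,v),x⟩ ≤ φ(t,u) + ⟨ψ(t,u),x⟩.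
  have key : ∀ x : Matrix (Fin d) (Fin d) ℝ, x.PosSemidef →
      φ t v + (ψ t v * x).trace ≤ φ t u + (ψ t u * x).trace := by
    intro x hx
    haveI : IsFiniteMeasure (p t x) :=
      ⟨lt_of_le_of_lt (hsub t ht x hx) ENNReal.one_lt_top⟩
    have hae : ∀ᵐ ξ ∂(p t x), ξ.PosSemidef := by
      rw [ae_iff]; exact hsupp t ht x hx
    have hmU : Measurable fun ξ : Matrix (Fin d) (Fin d) ℝ =>
        Real.exp (-(u * ξ).trace) :=
      (Real.continuous_exp.comp (cont_trace_mul' u).neg).measurable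
    have hmV : Measurable fun ξ : Matrix (Fin d) (Fin d) ℝ =>
        Real.exp (-(v * ξ).trace) :=
      (Real.continuous_exp.comp (cont_trace_mul' v).neg).measurable
    have hbound : ∀ w : Matrix (Fin d) (Fin d) ℝ, w.PosSemidef →
        ∀ᵐ ξ ∂(p t x), ‖Real.exp (-(w * ξ).trace)‖ ≤ 1 := by
      intro w hw
      refine hae.mono fun ξ hξ => ?_
      rw [Real.norm_eq_abs, abs_of_pos (Real.exp_pos _)]
      rw [Real.exp_le_one_iff]
      simpa using trace_mul_nonneg' hw hξ
    have hintU : Integrable (fun ξ => Real.exp (-(u * ξ).trace)) (p t x) :=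
      Integrable.mono' (integrable_const 1) hmU.aestronglyMeasurable (hbound u hu)
    have hintV : Integrable (fun ξ => Real.exp (-(v * ξ).trace)) (p t x) :=
      Integrable.mono' (integrable_const 1) hmV.aestronglyMeasurable (hbound v hv)
    have hle : ∫ ξ, Real.exp (-(u * ξ).trace) ∂(p t x)
        ≤ ∫ ξ, Real.exp (-(v * ξ).trace) ∂(p t x) := by
      refine integral_mono_ae hintU hintV (hae.mono fun ξ hξ => ?_)
      rw [Real.exp_le_exp]
      have h0 := trace_mul_nonneg' huv hξ
      rw [Matrix.sub_mul, Matrix.trace_sub] at h0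
      linarith
    rw [haff t ht u x hu hx, haff t ht v x hv hx] at hle
    have := Real.exp_le_exp.mp hle
    linarith
  -- The φ part, taking x = 0.
  have hφle : φ t v ≤ φ t u := by
    have h := key 0 Matrix.PosSemidef.zero
    simpa using h
  refine ⟨hφle, ?_⟩
  -- The ψ part.
  have hherm : (ψ t u - ψ t v).IsHermitian := (hψ t ht u hu).1.sub (hψ t ht v hv).1
  refine Matrix.PosSemidef.of_dotProduct_mulVec_nonneg hherm fun y => ?_
  rw [star_trivial]
  -- Set D := y ⬝ᵥ (ψ t u - ψ t v) *ᵥ y and show 0 ≤ D by scaling.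
  set D : ℝ := y ⬝ᵥ (ψ t u - ψ t v) *ᵥ y with hD
  by_contra hneg
  push_neg at hneg
  set C : ℝ := φ t u - φ t v with hC
  have hC0 : 0 ≤ C := by rw [hC]; linarith
  -- choose c with c^2 * (-D) > C
  obtain ⟨c, hc⟩ : ∃ c : ℝ, C < c ^ 2 * (-D) := by
    refine ⟨Real.sqrt ((C + 1) / (-D)), ?_⟩
    rw [Real.sq_sqrt (le_of_lt (div_pos (by linarith) (by linarith)))]
    rw [div_mul_cancel₀ _ (by linarith : (-D) ≠ 0)]
    linarith
  have h := key (Matrix.vecMulVec (c • y) (c • y)) (psd_vecMulVec' (c • y))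
  have htr : ∀ A : Matrix (Fin d) (Fin d) ℝ,
      (A * Matrix.vecMulVec (c • y) (c • y)).trace = c ^ 2 * (y ⬝ᵥ A *ᵥ y) := by
    intro A
    rw [trace_mul_vecMulVec', Matrix.mulVec_smul, dotProduct_smul,
      smul_dotProduct, smul_eq_mul, smul_eq_mul]
    ring
  rw [htr, htr] at h
  have hDsplit : y ⬝ᵥ (ψ t u - ψ t v) *ᵥ y = (y ⬝ᵥ ψ t u *ᵥ y) - (y ⬝ᵥ ψ t v *ᵥ y) := by
    simp [Matrix.sub_mulVec, dotProduct_sub]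
  rw [hDsplit] at hD
  nlinarith [sq_nonneg c]
end

section
/- Let h: S_d^+ → ℝ be Borel measurable, strictly positive, and satisfy Cauchy's exponential equation h(x + y) = h(x)·h(y) for all x,y ∈ S_d^+. Then there exists c ∈ S_d such that h(x) = e^{−⟨c,x⟩} for all x ∈ S_d^+. If in addition h(x) ≤ 1 for all x ∈ S_d^+, then c ∈ S_d^+. -/
open MeasureTheory Set Matrix

/-- Measurable solutions of Cauchy's functional equation on the half line are linear. -/
lemma additive_measurable_linear_aux (f : ℝ → ℝ)
    (hadd : ∀ s t : ℝ, 0 ≤ s → 0 ≤ t → f (s + t) = f s + f t)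
    (hmeas : Measurable fun t => if 0 ≤ t then f t else 0) :
    ∀ t : ℝ, 0 ≤ t → f t = t * f 1 := by
  set g : ℝ → ℝ := fun t => if 0 ≤ t then f t else 0 with hg
  set A : ℕ → Set ℝ := fun n => Icc (0:ℝ) 1 ∩ {t | |g t| ≤ n} with hA
  have hAmeas : ∀ n, MeasurableSet (A n) := by
    intro n
    exact measurableSet_Icc.inter ((hmeas.abs) measurableSet_Iic)
  have hAunion : ⋃ n, A n = Icc (0:ℝ) 1 := by
    apply Subset.antisymm
    · exact iUnion_subset fun n => inter_subset_left
    · intro t ht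
      obtain ⟨n, hn⟩ := exists_nat_ge (|g t|)
      exact mem_iUnion.2 ⟨n, ht, hn⟩
  have hmono : Monotone A := by
    intro m n hmn t ht
    refine ⟨ht.1, ?_⟩
    show |g t| ≤ (n:ℝ)
    exact le_trans ht.2 (by exact_mod_cast hmn)
  have hlim : Filter.Tendsto (fun n => volume (A n)) Filter.atTop (nhds (volume (Icc (0:ℝ) 1))) := by
    rw [← hAunion]
    exact tendsto_measure_iUnion_atTop hmono
  have h34 : ∃ n, (3/4 : ENNReal) < volume (A n) := by
    have h1 : volume (Icc (0:ℝ) 1) = 1 := by simp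
    rw [h1] at hlim
    have : ∀ᶠ n in Filter.atTop, (3/4 : ENNReal) < volume (A n) := by
      apply hlim.eventually_const_lt
      rw [ENNReal.div_lt_iff (by norm_num) (by norm_num)]
      norm_num
    exact this.exists
  obtain ⟨n, hn⟩ := h34
  have hbound : ∀ t : ℝ, 0 ≤ t → t ≤ 1/2 → |f t| ≤ 2 * n := by
    intro t ht0 ht12
    set B : Set ℝ := (fun u => u - t) ⁻¹' (A n) with hB
    have hBmeas : MeasurableSet B := (hAmeas n).preimage (measurable_id.sub_const t)
    have hBvol : volume B = volume (A n) := by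
      rw [hB, show (fun u : ℝ => u - t) = fun u => u + (-t) by funext u; ring]
      exact measure_preimage_add_right volume (-t) (A n)
    have hsub : A n ∪ B ⊆ Icc (0:ℝ) (3/2) := by
      rintro u (hu | hu)
      · exact ⟨hu.1.1, le_trans hu.1.2 (by norm_num)⟩
      · have h1 : 0 ≤ u - t := hu.1.1
        have h2 : u - t ≤ 1 := hu.1.2
        constructor <;> [linarith; linarith]
    have hvolU : volume (A n ∪ B) ≤ 3/2 := by
      calc volume (A n ∪ B) ≤ volume (Icc (0:ℝ) (3/2)) := measure_mono hsub
        _ = ENNReal.ofReal (3/2 - 0) := by rw [Real.volume_Icc]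
        _ = 3/2 := by
            rw [show (3/2 - 0:ℝ) = 3/2 by norm_num]
            rw [ENNReal.ofReal_div_of_pos (by norm_num)]
            norm_num
    have hint : volume (A n ∩ B) ≠ 0 := by
      have hkey := measure_union_add_inter (A n) (μ := volume) hBmeas
      intro h0
      rw [h0, add_zero, hBvol] at hkey
      have : volume (A n) + volume (A n) ≤ 3/2 := hkey ▸ hvolU
      have h2 : (3/4 : ENNReal) + 3/4 < volume (A n) + volume (A n) :=
        ENNReal.add_lt_add hn hn
      have h3 : (3/4 : ENNReal) + 3/4 = 3/2 := by
        rw [ENNReal.div_add_div_same]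
        rw [show (3+3 : ENNReal) = 2 * 3 by norm_num, show (4:ENNReal) = 2*2 by norm_num]
        rw [ENNReal.mul_div_mul_left] <;> norm_num
      rw [h3] at h2
      exact absurd this (not_le.2 h2)
    obtain ⟨a, haA, haB⟩ := nonempty_of_measure_ne_zero hint
    have ha1 : 0 ≤ a - t := (haB.1).1
    have ha0 : 0 ≤ a := haA.1.1
    have hfa : f a = f (a - t) + f t := by
      have := hadd (a - t) t ha1 ht0
      rwa [sub_add_cancel] at this
    have hga : |f a| ≤ n := by
      have h := haA.2
      simp only [Set.mem_setOf_eq, hg, ha0, if_true] at h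
      exact h
    have hgat : |f (a - t)| ≤ n := by
      have h := haB.2
      simp only [Set.mem_setOf_eq, Set.mem_preimage, hg, ha1, if_true] at h
      exact h
    have : f t = f a - f (a - t) := by linarith
    rw [this]
    calc |f a - f (a - t)| ≤ |f a| + |f (a - t)| := abs_sub _ _
      _ ≤ n + n := add_le_add hga hgat
      _ = 2 * n := by ring
  set L : ℝ := 2 * f 2⁻¹ with hL
  set ψ : ℝ → ℝ := fun t => f t - t * L with hψ
  have hψadd : ∀ s t : ℝ, 0 ≤ s → 0 ≤ t → ψ (s + t) = ψ s + ψ t := by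
    intro s t hs ht; simp only [hψ]; rw [hadd s t hs ht]; ring
  have hψhalf : ψ 2⁻¹ = 0 := by simp only [hψ, hL]; ring
  have hψper : ∀ t : ℝ, 0 ≤ t → ψ (t + 2⁻¹) = ψ t := by
    intro t ht; rw [hψadd t 2⁻¹ ht (by norm_num), hψhalf, add_zero]
  set C : ℝ := 2 * n + |L| / 2 with hC
  have hψb0 : ∀ t : ℝ, 0 ≤ t → t ≤ 1/2 → |ψ t| ≤ C := by
    intro t h0 h12
    simp only [hψ]
    calc |f t - t * L| ≤ |f t| + |t * L| := abs_sub _ _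
      _ ≤ 2*n + |L|/2 := by
          apply add_le_add (hbound t h0 h12)
          rw [abs_mul]
          calc |t| * |L| ≤ (1/2) * |L| := by
                apply mul_le_mul_of_nonneg_right _ (abs_nonneg L)
                rw [abs_of_nonneg h0]; exact h12
            _ = |L| / 2 := by ring
  have hψbAll : ∀ t : ℝ, 0 ≤ t → |ψ t| ≤ C := by
    have key : ∀ k : ℕ, ∀ t : ℝ, 0 ≤ t → t ≤ (k + 1) * (1/2) → |ψ t| ≤ C := by
      intro k
      induction k with
      | zero => intro t h0 h1; exact hψb0 t h0 (by linarith)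
      | succ m ih =>
        intro t h0 h1
        by_cases hc : t ≤ (m + 1) * (1/2)
        · exact ih t h0 hc
        · push_neg at hc
          have h0' : 0 ≤ t - 2⁻¹ := by
            have : (1:ℝ) * (1/2) ≤ (m+1) * (1/2) := by
              apply mul_le_mul_of_nonneg_right _ (by norm_num)
              linarith [Nat.cast_nonneg (α := ℝ) m]
            norm_num at this ⊢
            linarith
          have h1' : t - 2⁻¹ ≤ (m + 1) * (1/2) := by push_cast at h1 ⊢; linarith
          have := hψper (t - 2⁻¹) h0'
          rw [sub_add_cancel] at this
          rw [this]
          exact ih _ h0' h1'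
    intro t ht
    obtain ⟨k, hk⟩ := exists_nat_ge (2 * t)
    exact key k t ht (by push_cast; linarith)
  have hψnat : ∀ (m : ℕ) (t : ℝ), 0 ≤ t → ψ (m * t) = m * ψ t := by
    intro m
    induction m with
    | zero => intro t ht; simp only [Nat.cast_zero, zero_mul]
              have := hψadd 0 0 le_rfl le_rfl
              simp at this; linarith [this]
    | succ p ih =>
      intro t ht
      have : ((p:ℝ) + 1) * t = (p:ℝ) * t + t := by ring
      push_cast
      rw [this, hψadd _ t (by positivity) ht, ih t ht]; ring
  have hψzero : ∀ t : ℝ, 0 ≤ t → ψ t = 0 := by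
    intro t ht
    by_contra hne
    have habs : 0 < |ψ t| := abs_pos.2 hne
    obtain ⟨m, hm⟩ := exists_nat_gt (C / |ψ t|)
    have hm1 : 0 < (m:ℝ) := lt_of_le_of_lt (div_nonneg (le_trans (abs_nonneg _) (hψbAll t ht)) habs.le) hm
    have : (m:ℝ) * |ψ t| ≤ C := by
      have := hψbAll (m * t) (by positivity)
      rwa [hψnat m t ht, abs_mul, abs_of_nonneg (by positivity : (0:ℝ) ≤ (m:ℝ))] at this
    have : (m:ℝ) ≤ C / |ψ t| := (le_div_iff₀ habs).2 this
    linarith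
  intro t ht
  have h1 : ψ 1 = 0 := hψzero 1 zero_le_one
  have h2 : ψ t = 0 := hψzero t ht
  simp only [hψ] at h1 h2
  have : L = f 1 := by linarith
  rw [← this]; linarith

section aux
variable {d : ℕ}

lemma psd_smul_aux {x : Matrix (Fin d) (Fin d) ℝ} (hx : x.PosSemidef) {t : ℝ} (ht : 0 ≤ t) :
    (t • x).PosSemidef := by
  refine Matrix.PosSemidef.of_dotProduct_mulVec_nonneg ?_ ?_
  · have h1 := hx.1
    rw [Matrix.IsHermitian, Matrix.conjTranspose_eq_transpose_of_trivial] at h1 ⊢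
    rw [Matrix.transpose_smul, h1]
  · intro v
    have := hx.dotProduct_mulVec_nonneg v
    simp only [Matrix.smul_mulVec, dotProduct_smul, smul_eq_mul]
    positivity

lemma psd_smul_one_aux {t : ℝ} (ht : 0 ≤ t) : (t • (1 : Matrix (Fin d) (Fin d) ℝ)).PosSemidef :=
  psd_smul_aux Matrix.PosSemidef.one ht

/-- quadratic form bound by sum of absolute values of entries -/
lemma quad_bound_aux (x : Matrix (Fin d) (Fin d) ℝ) (v : Fin d → ℝ) :
    |v ⬝ᵥ x *ᵥ v| ≤ (∑ i, ∑ j, |x i j|) * (v ⬝ᵥ v) := by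
  have hvv : ∀ i j : Fin d, |v i * v j| ≤ v ⬝ᵥ v := by
    intro i j
    have h1 : |v i * v j| ≤ (v i ^ 2 + v j ^ 2) / 2 := by
      rw [abs_mul]
      nlinarith [sq_nonneg (|v i| - |v j|), sq_abs (v i), sq_abs (v j), abs_nonneg (v i), abs_nonneg (v j)]
    refine le_trans h1 ?_
    rw [dotProduct]
    have hsq : ∀ a : ℝ, a ^ 2 = a * a := fun a => sq a
    rw [hsq, hsq]
    have hi : v i * v i ≤ ∑ k, v k * v k :=
      Finset.single_le_sum (f := fun k => v k * v k) (fun k _ => mul_self_nonneg (v k)) (Finset.mem_univ i)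
    have hj : v j * v j ≤ ∑ k, v k * v k :=
      Finset.single_le_sum (f := fun k => v k * v k) (fun k _ => mul_self_nonneg (v k)) (Finset.mem_univ j)
    linarith
  calc |v ⬝ᵥ x *ᵥ v| = |∑ i, ∑ j, v i * (x i j * v j)| := by
        simp [dotProduct, Matrix.mulVec, Finset.mul_sum]
    _ ≤ ∑ i, |∑ j, v i * (x i j * v j)| := Finset.abs_sum_le_sum_abs _ _
    _ ≤ ∑ i, ∑ j, |v i * (x i j * v j)| :=
        Finset.sum_le_sum fun i _ => Finset.abs_sum_le_sum_abs _ _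
    _ ≤ ∑ i, ∑ j, |x i j| * (v ⬝ᵥ v) := by
        refine Finset.sum_le_sum fun i _ => Finset.sum_le_sum fun j _ => ?_
        rw [show v i * (x i j * v j) = x i j * (v i * v j) by ring, abs_mul]
        exact mul_le_mul_of_nonneg_left (hvv i j) (abs_nonneg _)
    _ = (∑ i, ∑ j, |x i j|) * (v ⬝ᵥ v) := by rw [Finset.sum_mul]; congr 1; funext i; rw [Finset.sum_mul]

lemma psd_add_smul_one_aux {x : Matrix (Fin d) (Fin d) ℝ} (hx : x.IsHermitian) :
    (x + (∑ i, ∑ j, |x i j|) • (1 : Matrix (Fin d) (Fin d) ℝ)).PosSemidef := by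
  refine Matrix.PosSemidef.of_dotProduct_mulVec_nonneg ?_ ?_
  · rw [Matrix.IsHermitian, Matrix.conjTranspose_eq_transpose_of_trivial] at hx ⊢
    rw [Matrix.transpose_add, hx, Matrix.transpose_smul, Matrix.transpose_one]
  · intro v
    have hq := quad_bound_aux x v
    have h1 : (star v) ⬝ᵥ (x + (∑ i, ∑ j, |x i j|) • (1 : Matrix (Fin d) (Fin d) ℝ)) *ᵥ v
        = v ⬝ᵥ x *ᵥ v + (∑ i, ∑ j, |x i j|) * (v ⬝ᵥ v) := by
      simp [Matrix.add_mulVec, dotProduct_add, Matrix.smul_mulVec,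
        Matrix.one_mulVec, dotProduct_smul, smul_eq_mul]
    rw [h1]
    have := abs_le.1 hq
    linarith [this.1]

lemma vecMulVec_psd_aux (v : Fin d → ℝ) : (Matrix.vecMulVec v v).PosSemidef := by
  refine Matrix.PosSemidef.of_dotProduct_mulVec_nonneg ?_ ?_
  · rw [Matrix.IsHermitian, Matrix.conjTranspose_eq_transpose_of_trivial]
    ext i j; simp [Matrix.vecMulVec_apply, mul_comm]
  · intro u
    have key : (star u) ⬝ᵥ (Matrix.vecMulVec v v) *ᵥ u = (v ⬝ᵥ u)^2 := by
      calc (star u) ⬝ᵥ (Matrix.vecMulVec v v) *ᵥ u = ∑ i, ∑ j, u i * (v i * v j * u j) := by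
            simp [dotProduct, Matrix.mulVec, Matrix.vecMulVec_apply, Finset.mul_sum]
        _ = (∑ i, v i * u i) * (∑ j, v j * u j) := by
            rw [Finset.sum_mul_sum]
            refine Finset.sum_congr rfl fun i _ => Finset.sum_congr rfl fun j _ => by ring
        _ = (v ⬝ᵥ u)^2 := by rw [dotProduct, sq]
    rw [key]; positivity

end aux

/-- Let `h : S_d^+ → ℝ` be Borel measurable, strictly positive, and
satisfy Cauchy's exponential equation `h(x+y) = h(x)·h(y)` for all positive
semidefinite `x, y`.  Then there is a symmetric matrix `c` with
`h(x) = exp(−⟨c,x⟩) = exp(−tr(cx))` for all positive semidefinite `x`.  If in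
addition `h ≤ 1` on the cone, then `c` is positive semidefinite. -/
theorem cauchy_exponential_equation_on_cone {d : ℕ}
    (h : Matrix (Fin d) (Fin d) ℝ → ℝ)
    (hmeas : ∀ E : Set ℝ, MeasurableSet E →
      MeasurableSet (h ⁻¹' E ∩ {x : Matrix (Fin d) (Fin d) ℝ | x.PosSemidef}))
    (hpos : ∀ x : Matrix (Fin d) (Fin d) ℝ, x.PosSemidef → 0 < h x)
    (hmul : ∀ x y : Matrix (Fin d) (Fin d) ℝ, x.PosSemidef → y.PosSemidef →
      h (x + y) = h x * h y) :
    ∃ c : Matrix (Fin d) (Fin d) ℝ, c.IsSymm ∧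
      (∀ x : Matrix (Fin d) (Fin d) ℝ, x.PosSemidef →
        h x = Real.exp (-(c * x).trace)) ∧
      ((∀ x : Matrix (Fin d) (Fin d) ℝ, x.PosSemidef → h x ≤ 1) → c.PosSemidef) := by
  classical
  set f : Matrix (Fin d) (Fin d) ℝ → ℝ := fun x => Real.log (h x) with hf
  have f0 : f 0 = 0 := by
    have h0 : h (0 + 0) = h 0 * h 0 := hmul 0 0 Matrix.PosSemidef.zero Matrix.PosSemidef.zero
    rw [add_zero] at h0
    have hp := hpos 0 Matrix.PosSemidef.zero
    have : h 0 = 1 := by nlinarith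
    simp [hf, this]
  have fadd : ∀ x y : Matrix (Fin d) (Fin d) ℝ, x.PosSemidef → y.PosSemidef →
      f (x + y) = f x + f y := by
    intro x y hx hy
    simp only [hf]
    rw [hmul x y hx hy, Real.log_mul (hpos x hx).ne' (hpos y hy).ne']
  -- homogeneity along rays via the 1-D lemma
  have fray : ∀ x : Matrix (Fin d) (Fin d) ℝ, x.PosSemidef → ∀ t : ℝ, 0 ≤ t →
      f (t • x) = t * f x := by
    intro x hx
    have hsm : Measurable (fun t : ℝ => t • x) := (continuous_id.smul continuous_const).measurable
    have hm : Measurable (fun t : ℝ => if 0 ≤ t then f (t • x) else 0) := by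
      intro E hE
      have hset : (fun t : ℝ => if 0 ≤ t then f (t • x) else 0) ⁻¹' E
          = (Ici (0:ℝ) ∩ (fun t : ℝ => t • x) ⁻¹'
              (h ⁻¹' (Real.log ⁻¹' E) ∩ {y : Matrix (Fin d) (Fin d) ℝ | y.PosSemidef}))
            ∪ {t : ℝ | t < 0 ∧ (0:ℝ) ∈ E} := by
        ext t
        by_cases ht : 0 ≤ t
        · simp only [Set.mem_preimage, Set.mem_union, Set.mem_inter_iff, Set.mem_Ici,
            Set.mem_setOf_eq, if_pos ht, hf]
          constructor
          · intro hE'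
            exact Or.inl ⟨ht, ⟨hE', psd_smul_aux hx ht⟩⟩
          · rintro (⟨-, hE', -⟩ | ⟨hlt, -⟩)
            · exact hE'
            · exact absurd hlt (not_lt.2 ht)
        · simp only [Set.mem_preimage, Set.mem_union, Set.mem_inter_iff, Set.mem_Ici,
            Set.mem_setOf_eq, if_neg ht]
          push_neg at ht
          constructor
          · intro h0; exact Or.inr ⟨ht, h0⟩
          · rintro (⟨hge, -⟩ | ⟨-, h0⟩)
            · exact absurd hge (not_le.2 ht)
            · exact h0
      rw [hset]
      apply MeasurableSet.union
      · exact measurableSet_Ici.inter (hsm (hmeas _ (Real.measurable_log hE)))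
      · by_cases h0 : (0:ℝ) ∈ E
        · simp only [h0, and_true]
          exact measurableSet_Iio
        · simp only [h0, and_false]
          exact MeasurableSet.empty
    have hadd1 : ∀ s t : ℝ, 0 ≤ s → 0 ≤ t → f ((s + t) • x) = f (s • x) + f (t • x) := by
      intro s t hs ht
      rw [add_smul]
      exact fadd _ _ (psd_smul_aux hx hs) (psd_smul_aux hx ht)
    have := additive_measurable_linear_aux (fun t => f (t • x)) hadd1 hm
    intro t ht
    have h1 := this t ht
    simp only [one_smul] at h1
    exact h1
  -- N x, the extension F
  set N : Matrix (Fin d) (Fin d) ℝ → ℝ := fun x => ∑ i, ∑ j, |x i j| with hN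
  have hNnn : ∀ x, 0 ≤ N x := by
    intro x
    exact Finset.sum_nonneg fun i _ => Finset.sum_nonneg fun j _ => abs_nonneg _
  set F : Matrix (Fin d) (Fin d) ℝ → ℝ := fun x => f (x + N x • 1) - f (N x • 1) with hF
  have hFeq : ∀ (x : Matrix (Fin d) (Fin d) ℝ) (s : ℝ), 0 ≤ s → (x + s • 1).PosSemidef →
      F x = f (x + s • 1) - f (s • 1) := by
    intro x s hs hxs
    have hxherm : x.IsHermitian := by
      have h1 := hxs.1
      have h2 : ((s:ℝ) • (1 : Matrix (Fin d) (Fin d) ℝ)).IsHermitian := (psd_smul_one_aux hs).1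
      have e : x = (x + s • 1) - s • (1 : Matrix (Fin d) (Fin d) ℝ) := by module
      rw [e]
      exact h1.sub h2
    have hxN : (x + N x • 1).PosSemidef := psd_add_smul_one_aux hxherm
    have key : ∀ a b : ℝ, 0 ≤ a → a ≤ b → (x + a • 1).PosSemidef →
        f (x + b • 1) - f (b • 1) = f (x + a • 1) - f (a • 1) := by
      intro a b ha hab hxa
      have hba : 0 ≤ b - a := by linarith
      have e1 : x + b • 1 = (x + a • 1) + (b - a) • (1 : Matrix (Fin d) (Fin d) ℝ) := by module
      have e2 : b • (1 : Matrix (Fin d) (Fin d) ℝ) = a • 1 + (b - a) • 1 := by module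
      rw [e1, e2, fadd _ _ hxa (psd_smul_one_aux hba),
        fadd _ _ (psd_smul_one_aux ha) (psd_smul_one_aux hba)]
      ring
    rcases le_total s (N x) with hle | hle
    · have := key s (N x) hs hle hxs
      simp only [hF]
      exact this
    · have := key (N x) s (hNnn x) hle hxN
      simp only [hF]
      exact this.symm
  have hFpsd : ∀ x : Matrix (Fin d) (Fin d) ℝ, x.PosSemidef → F x = f x := by
    intro x hx
    have h0 : (x + (0:ℝ) • (1 : Matrix (Fin d) (Fin d) ℝ)).PosSemidef := by
      simpa using hx
    have := hFeq x 0 le_rfl h0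
    simpa [f0] using this
  have hFadd : ∀ x y : Matrix (Fin d) (Fin d) ℝ, x.IsHermitian → y.IsHermitian →
      F (x + y) = F x + F y := by
    intro x y hx hy
    have hx' := psd_add_smul_one_aux hx
    have hy' := psd_add_smul_one_aux hy
    have e0 : x + y + (N x + N y) • (1 : Matrix (Fin d) (Fin d) ℝ)
        = (x + N x • 1) + (y + N y • 1) := by module
    have hsum : (x + y + (N x + N y) • (1 : Matrix (Fin d) (Fin d) ℝ)).PosSemidef := by
      rw [e0]; exact hx'.add hy'
    have e := hFeq (x + y) (N x + N y) (by positivity) hsum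
    rw [e, e0, fadd _ _ hx' hy',
      show ((N x + N y) • (1 : Matrix (Fin d) (Fin d) ℝ)) = N x • 1 + N y • 1 by module,
      fadd _ _ (psd_smul_one_aux (hNnn x)) (psd_smul_one_aux (hNnn y))]
    simp only [hF]
    ring
  have hermSmul : ∀ (x : Matrix (Fin d) (Fin d) ℝ) (t : ℝ), x.IsHermitian →
      (t • x).IsHermitian := by
    intro x t hx
    rw [Matrix.IsHermitian, Matrix.conjTranspose_eq_transpose_of_trivial] at hx ⊢
    rw [Matrix.transpose_smul, hx]
  have hFsmul : ∀ (x : Matrix (Fin d) (Fin d) ℝ) (t : ℝ), x.IsHermitian → 0 ≤ t →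
      F (t • x) = t * F x := by
    intro x t hx ht
    have hx' := psd_add_smul_one_aux hx
    have e1 : t • x + (t * N x) • (1 : Matrix (Fin d) (Fin d) ℝ) = t • (x + N x • 1) := by module
    have hpsd' : (t • x + (t * N x) • (1 : Matrix (Fin d) (Fin d) ℝ)).PosSemidef := by
      rw [e1]; exact psd_smul_aux hx' ht
    have e := hFeq (t • x) (t * N x) (mul_nonneg ht (hNnn x)) hpsd'
    rw [e, e1, fray _ hx' t ht,
      show ((t * N x) • (1 : Matrix (Fin d) (Fin d) ℝ)) = t • (N x • 1) by module,
      fray _ (psd_smul_one_aux (hNnn x)) t ht]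
    simp only [hF]
    ring
  have hF0 : F 0 = 0 := by
    have h0 : ((0 : Matrix (Fin d) (Fin d) ℝ) + (0:ℝ) • 1).PosSemidef := by
      simpa using (Matrix.PosSemidef.zero (n := Fin d) (R := ℝ))
    have := hFeq 0 0 le_rfl h0
    simpa [f0] using this
  have hFneg : ∀ x : Matrix (Fin d) (Fin d) ℝ, x.IsHermitian → F (-x) = -F x := by
    intro x hx
    have := hFadd x (-x) hx hx.neg
    rw [show x + -x = (0 : Matrix (Fin d) (Fin d) ℝ) by module, hF0] at this
    linarith
  have hFsmulR : ∀ (x : Matrix (Fin d) (Fin d) ℝ) (t : ℝ), x.IsHermitian →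
      F (t • x) = t * F x := by
    intro x t hx
    rcases le_or_gt 0 t with ht | ht
    · exact hFsmul x t hx ht
    · have h1 : t • x = -((-t) • x) := by module
      rw [h1, hFneg _ (hermSmul x (-t) hx), hFsmul x (-t) hx (by linarith)]
      ring
  -- the basis matrices
  set Δ : Fin d → Fin d → Matrix (Fin d) (Fin d) ℝ :=
    fun i j => (2⁻¹ : ℝ) • (Matrix.single i j 1 + Matrix.single j i 1) with hΔ
  have hΔcomm : ∀ i j, Δ i j = Δ j i := by
    intro i j
    simp only [hΔ]
    rw [add_comm]
  have hΔherm : ∀ i j, (Δ i j).IsHermitian := by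
    intro i j
    rw [Matrix.IsHermitian, Matrix.conjTranspose_eq_transpose_of_trivial]
    ext a b
    simp only [hΔ, Matrix.transpose_apply, Matrix.smul_apply, Matrix.add_apply,
      Matrix.single, Matrix.of_apply, smul_eq_mul]
    rw [add_comm]
    have e1 : (i = b ∧ j = a) ↔ (j = a ∧ i = b) := and_comm
    have e2 : (j = b ∧ i = a) ↔ (i = a ∧ j = b) := and_comm
    simp only [e1, e2]
  have hexpand : ∀ x : Matrix (Fin d) (Fin d) ℝ, x.IsSymm →
      x = ∑ i, ∑ j, (x i j) • Δ i j := by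
    intro x hx
    ext a b
    rw [Matrix.sum_apply]
    simp only [hΔ, Matrix.sum_apply, Matrix.smul_apply, Matrix.add_apply, Matrix.single,
      Matrix.of_apply, smul_eq_mul, mul_ite, mul_one, mul_zero, ite_and, mul_add,
      Finset.sum_add_distrib, Finset.sum_ite_eq, Finset.sum_ite_eq', Finset.mem_univ, if_true]
    have hba : x b a = x a b := by
      conv_lhs => rw [← hx]
      rfl
    rw [Finset.sum_eq_single a (fun c _ hc => by simp [hc]) (by simp)]
    simp only [if_true, eq_self_iff_true]
    rw [Finset.sum_eq_single b (fun c _ hc => by simp [hc]) (by simp)]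
    simp only [if_true, eq_self_iff_true]
    rw [hba]
    ring
  have hFfinsum : ∀ (s : Finset (Fin d)) (G : Fin d → Matrix (Fin d) (Fin d) ℝ),
      (∀ i, (G i).IsHermitian) →
      (∑ i ∈ s, G i).IsHermitian ∧ F (∑ i ∈ s, G i) = ∑ i ∈ s, F (G i) := by
    intro s G hG
    induction s using Finset.induction_on with
    | empty =>
      simp only [Finset.sum_empty]
      exact ⟨Matrix.isHermitian_zero, hF0⟩
    | insert _ _ hni ih =>
      rw [Finset.sum_insert hni, Finset.sum_insert hni]
      exact ⟨(hG _).add ih.1, by rw [hFadd _ _ (hG _) ih.1, ih.2]⟩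
  have hsymm_of_psd : ∀ x : Matrix (Fin d) (Fin d) ℝ, x.PosSemidef → x.IsSymm := by
    intro x hx
    have := hx.1
    rwa [Matrix.IsHermitian, Matrix.conjTranspose_eq_transpose_of_trivial] at this
  have hFformula : ∀ x : Matrix (Fin d) (Fin d) ℝ, x.IsSymm →
      F x = ∑ i, ∑ j, x i j * F (Δ i j) := by
    intro x hx
    conv_lhs => rw [hexpand x hx]
    have houter := hFfinsum Finset.univ (fun i => ∑ j, x i j • Δ i j)
      (fun i => (hFfinsum Finset.univ (fun j => x i j • Δ i j)
        (fun j => hermSmul _ _ (hΔherm i j))).1)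
    rw [houter.2]
    refine Finset.sum_congr rfl fun i _ => ?_
    rw [(hFfinsum Finset.univ (fun j => x i j • Δ i j)
      (fun j => hermSmul _ _ (hΔherm i j))).2]
    exact Finset.sum_congr rfl fun j _ => hFsmulR _ _ (hΔherm i j)
  -- the matrix c
  refine ⟨Matrix.of (fun i j => -F (Δ i j)), ?_, ?_, ?_⟩
  · -- symmetry
    ext i j
    simp only [Matrix.transpose_apply, Matrix.of_apply]
    rw [hΔcomm]
  · -- the formula
    intro x hx
    have hxs := hsymm_of_psd x hx
    have htr : -(Matrix.of (fun i j => -F (Δ i j)) * x).trace = F x := by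
      rw [hFformula x hxs]
      rw [Matrix.trace]
      rw [← Finset.sum_neg_distrib]
      rw [Finset.sum_comm]
      refine Finset.sum_congr rfl fun i _ => ?_
      rw [Matrix.diag_apply, Matrix.mul_apply, ← Finset.sum_neg_distrib]
      refine Finset.sum_congr rfl fun j _ => ?_
      simp only [Matrix.of_apply]
      have hxji : x j i = x i j := by
        conv_lhs => rw [← hxs]
        rfl
      rw [hΔcomm j i, hxji]
      ring
    rw [htr, hFpsd x hx]
    simp only [hf]
    rw [Real.exp_log (hpos x hx)]
  · -- positive semidefiniteness
    intro hle
    refine Matrix.PosSemidef.of_dotProduct_mulVec_nonneg ?_ ?_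
    · rw [Matrix.IsHermitian, Matrix.conjTranspose_eq_transpose_of_trivial]
      ext i j
      simp only [Matrix.transpose_apply, Matrix.of_apply]
      rw [hΔcomm]
    · intro v
      have hvv := vecMulVec_psd_aux v
      have h1 := hle _ hvv
      have hxs := hsymm_of_psd _ hvv
      -- h (vecMulVec v v) = exp (-(trace)) and trace equals quadratic form
      have htr : -(Matrix.of (fun i j => -F (Δ i j)) * Matrix.vecMulVec v v).trace = F (Matrix.vecMulVec v v) := by
        rw [hFformula _ hxs]
        rw [Matrix.trace]
        rw [← Finset.sum_neg_distrib]
        rw [Finset.sum_comm]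
        refine Finset.sum_congr rfl fun i _ => ?_
        rw [Matrix.diag_apply, Matrix.mul_apply, ← Finset.sum_neg_distrib]
        refine Finset.sum_congr rfl fun j _ => ?_
        simp only [Matrix.of_apply]
        have hxji : Matrix.vecMulVec v v j i = Matrix.vecMulVec v v i j := by
          simp [Matrix.vecMulVec_apply, mul_comm]
        rw [hΔcomm j i, hxji]
        ring
      have hFv : F (Matrix.vecMulVec v v) = f (Matrix.vecMulVec v v) := hFpsd _ hvv
      have hhv : h (Matrix.vecMulVec v v) = Real.exp (F (Matrix.vecMulVec v v)) := by
        rw [hFv]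
        simp only [hf]
        rw [Real.exp_log (hpos _ hvv)]
      rw [hhv, Real.exp_le_one_iff] at h1
      -- now relate the quadratic form to the trace
      have hquad : (star v) ⬝ᵥ (Matrix.of (fun i j => -F (Δ i j))) *ᵥ v
          = (Matrix.of (fun i j => -F (Δ i j)) * Matrix.vecMulVec v v).trace := by
        rw [Matrix.trace]
        simp only [star_trivial, dotProduct, Matrix.mulVec, Matrix.diag_apply,
          Matrix.mul_apply, Matrix.vecMulVec_apply, Matrix.of_apply, Finset.mul_sum,
          Finset.sum_mul]
        rw [Finset.sum_comm]
        refine Finset.sum_congr rfl fun i _ => Finset.sum_congr rfl fun j _ => by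
          rw [hΔcomm j i]
          ring
      rw [hquad]
      have : (Matrix.of (fun i j => -F (Δ i j)) * Matrix.vecMulVec v v).trace
          = -F (Matrix.vecMulVec v v) := by linarith [htr]
      rw [this]
      linarith
end
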